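/- A vertical vector lies in ⋂_{α=1}^k Ker ω^α if and only if it lies in the kernel of the Legendre differential; precisely, (⋂_{α=1}^k Ker ω^α) ∩ W = Ker Λ, where W = {0} × (Fin k → ℝ^n) is the vertical subspace. (Pointwise content of the Lemma: [𝔛^k(T^1_kQ)]^⊥ ∩ 𝔛^V(T^1_kQ) = Ker 𝓕𝓛_*.) -/
import Mathlib


/-- Pointwise content of the Lemma
`[𝔛^k(T^1_kQ)]^⊥ ∩ 𝔛^V(T^1_kQ) = Ker 𝓕𝓛_*`:
a vertical vector lies in `⋂_{α=1}^k Ker ω^α` iff it lies in the kernel of the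
Legendre differential. -/
theorem stmt1 {k n : ℕ} (hk : 1 ≤ k) (hn : 1 ≤ n)
    (A : Fin k → Fin n → Fin n → ℝ)
    (H : Fin k → Fin n → Fin k → Fin n → ℝ)
    (hH : ∀ α i β j, H α i β j = H β j α i)
    (ω : Fin k → ((Fin n → ℝ) × (Fin k → Fin n → ℝ)) →
        ((Fin n → ℝ) × (Fin k → Fin n → ℝ)) → ℝ)
    (hω : ∀ α u w u' w', ω α (u, w) (u', w') =
      (∑ i, ∑ j, A α i j * (u i * u' j - u' i * u j)) +
      (∑ β, ∑ i, ∑ j, H α i β j * (u i * w' β j - u' i * w β j)))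
    (Λ : ((Fin n → ℝ) × (Fin k → Fin n → ℝ)) → ((Fin n → ℝ) × (Fin k → Fin n → ℝ)))
    (hΛ : ∀ u w, Λ (u, w) =
      (u, fun α i => (∑ j, A α i j * u j) + ∑ β, ∑ j, H α i β j * w β j))
    (Z : (Fin n → ℝ) × (Fin k → Fin n → ℝ)) :
    ((∀ α Y, ω α Z Y = 0) ∧ Z.1 = 0) ↔ Λ Z = 0 := by
  obtain ⟨u, w⟩ := Z
  constructor
  · rintro ⟨hker, hu⟩
    simp only at hu
    subst hu
    rw [hΛ]
    have key : ∀ α i, (∑ β, ∑ j, H α i β j * w β j) = 0 := by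
      intro α i
      have h := hker α (Pi.single i 1, 0)
      rw [hω] at h
      have : (∑ β, ∑ i', ∑ j, H α i' β j * ((0:Fin n → ℝ) i' * (0:Fin k → Fin n → ℝ) β j
          - (Pi.single i 1 : Fin n → ℝ) i' * w β j)) = 0 := by
        simpa using h
      rw [Finset.sum_comm] at this
      have h2 : (∑ i', ∑ β, ∑ j, H α i' β j * (0 - (Pi.single i 1 : Fin n → ℝ) i' * w β j)) = 0 := by
        simpa using this
      rw [Finset.sum_eq_single i] at h2
      · simpa [neg_eq_zero, Finset.sum_neg_distrib] using h2
      · intro b _ hb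
        simp [Pi.single_apply, hb]
      · simp
    refine Prod.ext rfl ?_
    funext α i
    simp [key α i]
  · intro h
    rw [hΛ] at h
    have hu : u = 0 := congrArg Prod.fst h
    have hw : ∀ α i, (∑ j, A α i j * u j) + ∑ β, ∑ j, H α i β j * w β j = 0 := by
      intro α i; exact congrFun (congrFun (congrArg Prod.snd h) α) i
    subst hu
    have hw' : ∀ α i, (∑ β, ∑ j, H α i β j * w β j) = 0 := by
      intro α i; simpa using hw α i
    refine ⟨?_, rfl⟩
    intro α Y
    obtain ⟨u', w'⟩ := Y
    rw [hω]
    rw [Finset.sum_comm (γ := Fin k)]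
    simp only [Pi.zero_apply, zero_mul, zero_sub, mul_neg, mul_zero, sub_zero, zero_add]
    have key2 : ∀ i : Fin n, ∑ β, ∑ j, H α i β j * (u' i * w β j)
        = u' i * ∑ β, ∑ j, H α i β j * w β j := by
      intro i
      rw [Finset.mul_sum]
      refine Finset.sum_congr rfl fun β _ => ?_
      rw [Finset.mul_sum]
      exact Finset.sum_congr rfl fun j _ => by ring
    simp [key2, hw']
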